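/- Let Q be a prime power, β ∈ F_{Q^2} with β^{Q+1} = 1, and h = Σ_{i=0}^d a_i x^i ∈ F_{Q^2}[x] with a_0 ≠ 0 and a_{d-i} = (β a_i)^Q for 0 ≤ i ≤ d. Suppose h has no roots in μ_{Q+1}. Then for every α ∈ F_{Q^2} with α^{Q+1} = 1, one has h(α)^Q / h(α) = α^{-d} β. -/

import Mathlib

theorem stmt_15 (p e Q : ℕ) (hp : p.Prime) (he : 0 < e) (hQ : Q = p ^ e)
    (F : Type*) [Field F] [Fintype F] (hF : Fintype.card F = Q ^ 2)
    (β : F) (hβ : β ^ (Q + 1) = 1)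
    (d : ℕ) (a : ℕ → F) (h : Polynomial F)
    (hh : h = ∑ i ∈ Finset.range (d + 1), Polynomial.C (a i) * Polynomial.X ^ i)
    (h0 : a 0 ≠ 0) (hcoef : ∀ i ≤ d, a (d - i) = (β * a i) ^ Q)
    (hroots : ∀ α : F, α ^ (Q + 1) = 1 → h.eval α ≠ 0) :
    ∀ α : F, α ^ (Q + 1) = 1 →
      h.eval α ^ Q / h.eval α = (α⁻¹) ^ d * β := by
  -- establish CharP F p
  have hq := FiniteField.card F (ringChar F)
  obtain ⟨n, hqp, hcard⟩ := hq
  have hpq : ringChar F = p := by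
    have hdvd : ringChar F ∣ p ^ (e * 2) := by
      rw [pow_mul, ← hQ, ← hF, hcard]
      exact dvd_pow_self _ n.ne_zero
    exact (Nat.prime_dvd_prime_iff_eq hqp hp).mp (hqp.dvd_of_dvd_pow hdvd)
  haveI : CharP F p := hpq ▸ ringChar.charP F
  intro α hα
  have hα0 : α ≠ 0 := by
    rintro rfl; simp [zero_pow, Nat.succ_ne_zero] at hα
  have hβ0 : β ≠ 0 := by
    rintro rfl; simp [zero_pow, Nat.succ_ne_zero] at hβ
  have hαQ : α ^ Q = α⁻¹ := by
    field_simp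
    rw [← pow_succ]; exact hα
  have hβQ : β ^ Q = β⁻¹ := by
    field_simp
    rw [← pow_succ]; exact hβ
  have hE : h.eval α = ∑ i ∈ Finset.range (d + 1), a i * α ^ i := by
    simp [hh, Polynomial.eval_finset_sum]
  have key : h.eval α ^ Q = β * (α⁻¹) ^ d * h.eval α := by
    have hfrob : h.eval α ^ Q =
        ∑ i ∈ Finset.range (d + 1), (a i * α ^ i) ^ Q := by
      haveI : Fact p.Prime := ⟨hp⟩
      haveI : ExpChar F p := ExpChar.prime hp
      rw [hE, hQ]; exact sum_pow_char_pow (p := p) (n := e) _ _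
    rw [hfrob]
    have step : ∀ i ∈ Finset.range (d + 1),
        (a i * α ^ i) ^ Q = β * (α⁻¹) ^ d * (a (d - i) * α ^ (d - i)) := by
      intro i hi
      rw [Finset.mem_range, Nat.lt_succ_iff] at hi
      have h1 : (a i) ^ Q = β * a (d - i) := by
        have := hcoef i hi
        rw [mul_pow, hβQ] at this
        rw [eq_comm, mul_comm] at this
        field_simp at this ⊢
        linear_combination this
      have h2 : (α ^ i) ^ Q = (α⁻¹) ^ i := by
        rw [← pow_mul, mul_comm, pow_mul, hαQ]
      have h3 : (α⁻¹) ^ d = (α⁻¹) ^ (d - i) * (α⁻¹) ^ i := by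
        rw [← pow_add, Nat.sub_add_cancel hi]
      rw [mul_pow, h1, h2, h3]
      field_simp
      ring_nf
      rw [mul_assoc, ← mul_pow, mul_inv_cancel₀ hα0, one_pow, mul_one]
    rw [Finset.sum_congr rfl step, ← Finset.mul_sum]
    congr 1
    rw [hE]
    rw [← Finset.sum_range_reflect (fun i => a i * α ^ i) (d+1)]
    apply Finset.sum_congr rfl
    intro i hi
    rw [Finset.mem_range, Nat.lt_succ_iff] at hi
    congr 1 <;> rw [Nat.succ_sub_one] <;> rfl
  have hne := hroots α hα
  rw [key]
  field_simp
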